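/- With the same setup, f(x,t) = (|x|+√t)^{α(x,t)} does NOT belong to any constant-exponent Hölder space C^β(Ω̄_T) for β ∈ (γ², 1): the quotient |f(θ_n)-f(0)| / d(θ_n, 0)^β is unbounded along θ_n = (ζ/n, 0, …, 0, 1/n²). -/

import Mathlib

open Real Set Filter

/-- The parabolic distance on `ℝⁿ × ℝ`. -/
noncomputable def pd {n : ℕ} (P Q : (Fin n → ℝ) × ℝ) : ℝ :=
  max ‖P.1 - Q.1‖ (Real.sqrt |P.2 - Q.2|)

/-- With `α(x,t) = (γ+|x|)(γ+t)` and `f(x,t) = (|x|+√t)^{α(x,t)}` on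
`Ω_T = B(0,ζ)×(0,ζ)`, `f` does not belong to any constant-exponent Hölder space
`C^β` with `γ² < β < 1`: along `θ_m = ((ζ/m,0,…,0), 1/m²)` the quotient
`|f(θ_m) - f(0)| / d(θ_m,0)^β` tends to infinity (here `f(0,0) = 0`). -/
theorem example_function_not_constant_holder (n : ℕ) (hn : 0 < n) (γ ζ : ℝ)
    (hγ1 : Real.exp (-2) < γ) (hγ2 : γ < 1) (hζ1 : 0 < ζ) (hζ2 : ζ < 1 - γ)
    (β : ℝ) (hβ1 : γ ^ 2 < β) (hβ2 : β < 1) :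
    Tendsto
      (fun m : ℕ =>
        |((‖(fun i : Fin n => if i = ⟨0, hn⟩ then ζ / m else 0)‖ +
              Real.sqrt (1 / (m : ℝ) ^ 2)) ^
            ((γ + ‖(fun i : Fin n => if i = ⟨0, hn⟩ then ζ / m else 0)‖) *
              (γ + 1 / (m : ℝ) ^ 2))) -
          ((0:ℝ) + Real.sqrt 0) ^ ((γ + (0:ℝ)) * (γ + 0))| /
          pd ((fun i : Fin n => if i = ⟨0, hn⟩ then ζ / m else 0), 1 / (m : ℝ) ^ 2)
            (0, 0) ^ β)
      atTop atTop := by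
  have hγ0 : 0 < γ := lt_trans (Real.exp_pos _) hγ1
  set ε : ℝ := (β - γ ^ 2) / 2 with hε
  have hε0 : 0 < ε := by simp [hε]; linarith
  -- the variable exponent
  set a : ℕ → ℝ := fun m => (γ + ζ / m) * (γ + 1 / (m : ℝ) ^ 2) with ha
  have ha_tendsto : Tendsto a atTop (nhds (γ ^ 2)) := by
    have h1 : Tendsto (fun m : ℕ => ζ / m) atTop (nhds 0) := by
      simpa [div_eq_mul_inv] using (tendsto_one_div_atTop_nhds_zero_nat.const_mul ζ)
    have h2 : Tendsto (fun m : ℕ => 1 / (m : ℝ) ^ 2) atTop (nhds 0) := by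
      simpa [div_pow] using ((tendsto_one_div_atTop_nhds_zero_nat :
        Tendsto (fun m : ℕ => 1 / (m : ℝ)) atTop (nhds 0)).pow 2)
    have := ((tendsto_const_nhds.add h1).mul (tendsto_const_nhds.add h2) :
      Tendsto (fun m : ℕ => (γ + ζ / m) * (γ + 1 / (m : ℝ) ^ 2)) atTop
        (nhds ((γ + 0) * (γ + 0))))
    rw [ha]
    simpa [sq] using this
  have ha_ev : ∀ᶠ m in atTop, a m ≤ β - ε :=
    ha_tendsto.eventually_le_const (by simp [hε]; linarith)
  have hlow : Tendsto (fun m : ℕ => (m : ℝ) ^ ε) atTop atTop :=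
    (tendsto_rpow_atTop hε0).comp tendsto_natCast_atTop_atTop
  refine tendsto_atTop_mono' atTop ?_ hlow
  filter_upwards [eventually_ge_atTop 1, ha_ev] with m hm1 hma
  have hmR : (1 : ℝ) ≤ (m : ℝ) := by exact_mod_cast hm1
  have hmR0 : (0 : ℝ) < (m : ℝ) := lt_of_lt_of_le one_pos hmR
  -- simplify the norm
  have hvec : (fun i : Fin n => if i = ⟨0, hn⟩ then ζ / m else 0)
      = Pi.single (⟨0, hn⟩ : Fin n) (ζ / m) := by
    funext i; simp [Pi.single_apply]
  have hnorm : ‖(fun i : Fin n => if i = ⟨0, hn⟩ then ζ / m else 0)‖ = ζ / m := by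
    rw [hvec, Pi.norm_single, Real.norm_of_nonneg (by positivity)]
  -- simplify the sqrt
  have hsqrt : Real.sqrt (1 / (m : ℝ) ^ 2) = 1 / m := by
    rw [show (1 : ℝ) / (m : ℝ) ^ 2 = (1 / m) ^ 2 by field_simp,
      Real.sqrt_sq (by positivity)]
  -- simplify the parabolic distance
  have hpd : pd ((fun i : Fin n => if i = ⟨0, hn⟩ then ζ / m else 0),
      1 / (m : ℝ) ^ 2) (0, 0) = 1 / m := by
    simp only [pd, sub_zero, abs_of_nonneg (by positivity : (0:ℝ) ≤ 1 / (m:ℝ) ^ 2),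
      hnorm, hsqrt]
    exact max_eq_right ((div_le_div_iff_of_pos_right hmR0).mpr (by linarith))
  have hzero : ((0:ℝ) + Real.sqrt 0) ^ ((γ + (0:ℝ)) * (γ + 0)) = 0 := by
    rw [Real.sqrt_zero, add_zero, add_zero, Real.zero_rpow (by positivity)]
  have ha0 : 0 ≤ a m := by
    have : 0 ≤ γ + ζ / m := by positivity
    have : 0 ≤ γ + 1 / (m : ℝ) ^ 2 := by positivity
    exact mul_nonneg (by positivity) (by positivity)
  rw [hnorm, hsqrt, hpd, hzero, sub_zero,
    abs_of_nonneg (Real.rpow_nonneg (by positivity) _)]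
  have hbase : ζ / m + 1 / m = (ζ + 1) / m := (add_div ζ 1 (m:ℝ)).symm
  rw [hbase]
  have hexp : (γ + ζ / m) * (γ + 1 / (m : ℝ) ^ 2) = a m := rfl
  rw [hexp]
  have hrw : ((ζ + 1) / m) ^ a m / ((1 : ℝ) / m) ^ β
      = (ζ + 1) ^ a m / (m : ℝ) ^ a m * (m : ℝ) ^ β := by
    rw [Real.div_rpow (by linarith) hmR0.le, one_div,
      Real.inv_rpow hmR0.le, div_eq_mul_inv _ ((m:ℝ)^β)⁻¹, inv_inv]
  rw [hrw]
  have h1 : (1:ℝ) ≤ (ζ + 1) ^ a m := by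
    simpa using Real.rpow_le_rpow_of_exponent_le (by linarith : (1:ℝ) ≤ ζ + 1) ha0
  calc (m : ℝ) ^ ε ≤ (m : ℝ) ^ (β - a m) :=
        Real.rpow_le_rpow_of_exponent_le hmR (by linarith)
    _ = (m : ℝ) ^ β / (m : ℝ) ^ a m := Real.rpow_sub hmR0 _ _
    _ ≤ (ζ + 1) ^ a m * ((m : ℝ) ^ β / (m : ℝ) ^ a m) :=
        le_mul_of_one_le_left (by positivity) h1
    _ = (ζ + 1) ^ a m / (m : ℝ) ^ a m * (m : ℝ) ^ β := by ring
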